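/- Let N ≥ 1, 1 ≤ d ≤ N, and for A ∈ Matrix (Fin N) (Fin N) ℂ let M_d be the d×d submatrix of A formed by rows N−d+1,…,N and columns 1,…,d (the lower-left corner). Then for any matrix G ∈ Matrix (Fin N) (Fin N) ℂ and any indices k, l: Σ_{r=N−d+1}^{N} Σ_{s=1}^{d} adj(M_d)_{s̄,r̄} · [ (sgn(r−k)−1)·A_{k,s}·G_{r,l} + (sgn(s−l)+1)·G_{k,s}·A_{r,l} + (sgn(s−k)+1)·A_{r,k}·G_{s,l} + (sgn(r−l)−1)·A_{l,s}·G_{k,r} ] = c^d_{k,l} · G_{k,l} · det(M_d), where r̄ = r−(N−d) and s̄ = s are the indices of (r,s) inside M_d, adj is the adjugate, and c^d_{k,l} = −[k+d>N] + [d+1>l] + [d+1>k] − [l+d>N] with [·] the Iverson bracket. In particular (taking G = A) the bracket {det M_d, A_{k,l}} equals c^d_{k,l}·A_{k,l}·det M_d. -/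
import Mathlib


open Matrix

noncomputable section

/-- The sign of the difference of two indices, as a complex number
(`sgn : ℤ → ℤ` with `sgn 0 = 0`). -/
def fsgn {N : ℕ} (a b : Fin N) : ℂ := ((((a : ℕ) : ℤ) - ((b : ℕ) : ℤ)).sign : ℤ)

/-- Global row index in `A` of the `r`-th row of the `e × e` lower-left corner minor
(rows `N−e+1,…,N` in 1-based indexing). -/
def cornerRow (N e : ℕ) (he : e ≤ N) (r : Fin e) : Fin N :=
  ⟨N - e + r.val, by have := r.isLt; omega⟩

/-- Global column index in `A` of the `s`-th column of the `e × e` lower-left corner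
minor (columns `1,…,e`). -/
def cornerCol (N e : ℕ) (he : e ≤ N) (s : Fin e) : Fin N :=
  ⟨s.val, by have := s.isLt; omega⟩

/-- The `e × e` lower-left corner submatrix `M_e` of `A`. -/
def corner (N e : ℕ) (he : e ≤ N) (A : Matrix (Fin N) (Fin N) ℂ) :
    Matrix (Fin e) (Fin e) ℂ :=
  fun r s => A (cornerRow N e he r) (cornerCol N e he s)

/-- The mixed bracket `{A_{r,s}, G^{(p)}_{k,l}}` of the affine algebra between a
zero-level entry and a level-`p` entry. -/
def mixedBr {N : ℕ} (A G : Matrix (Fin N) (Fin N) ℂ) (r s k l : Fin N) : ℂ :=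
  (fsgn r k - 1) * A k s * G r l + (fsgn s l + 1) * G k s * A r l
    + (fsgn s k + 1) * A r k * G s l + (fsgn r l - 1) * A l s * G k r

/-- The coefficient `c^d_{k,l} = −[k+d>N] + [d+1>l] + [d+1>k] − [l+d>N]` (1-based
Iverson brackets; here `k l : Fin N` are 0-based). -/
def cCoef (N d : ℕ) (k l : Fin N) : ℤ :=
  -(if (k : ℕ) + d ≥ N then 1 else 0) + (if (l : ℕ) < d then 1 else 0)
    + (if (k : ℕ) < d then 1 else 0) - (if (l : ℕ) + d ≥ N then 1 else 0)

lemma fsgn_self {N : ℕ} (a : Fin N) : fsgn a a = 0 := by simp [fsgn]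

lemma fsgn_of_lt {N : ℕ} {a b : Fin N} (h : (a:ℕ) < (b:ℕ)) : fsgn a b = -1 := by
  have : ((a:ℕ):ℤ) - ((b:ℕ):ℤ) < 0 := by omega
  simp [fsgn, Int.sign_eq_neg_one_of_neg this]

lemma fsgn_of_gt {N : ℕ} {a b : Fin N} (h : (b:ℕ) < (a:ℕ)) : fsgn a b = 1 := by
  have : 0 < ((a:ℕ):ℤ) - ((b:ℕ):ℤ) := by omega
  simp [fsgn, Int.sign_eq_one_of_pos this]

lemma key1 {d : ℕ} (M : Matrix (Fin d) (Fin d) ℂ) (c : Fin d → ℂ) (j : Fin d) :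
    ∑ r : Fin d, ∑ s : Fin d, M.adjugate s r * (c s * M r j) = c j * M.det := by
  rw [Finset.sum_comm]
  have h : ∀ s : Fin d, ∑ r : Fin d, M.adjugate s r * (c s * M r j)
      = c s * ((M.adjugate * M) s j) := by
    intro s
    rw [Matrix.mul_apply, Finset.mul_sum]
    exact Finset.sum_congr rfl fun r _ => by ring
  simp_rw [h, Matrix.adjugate_mul]
  simp [Matrix.smul_apply, Matrix.one_apply, mul_comm]

lemma key2 {d : ℕ} (M : Matrix (Fin d) (Fin d) ℂ) (c : Fin d → ℂ) (i : Fin d) :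
    ∑ r : Fin d, ∑ s : Fin d, M.adjugate s r * (c r * M i s) = c i * M.det := by
  have h : ∀ r : Fin d, ∑ s : Fin d, M.adjugate s r * (c r * M i s)
      = c r * ((M * M.adjugate) i r) := by
    intro r
    rw [Matrix.mul_apply, Finset.mul_sum]
    exact Finset.sum_congr rfl fun s _ => by ring
  simp_rw [h, Matrix.mul_adjugate]
  simp [Matrix.smul_apply, Matrix.one_apply, mul_comm]

/-- the bracket of the lower-left corner minor `det M_d` with any entry,
computed by the Leibniz rule via the cofactors `adj(M_d)_{s̄,r̄} = ∂det M_d/∂A_{r,s}`,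
equals `c^d_{k,l} · G_{k,l} · det M_d`. -/
theorem corner_minor_bracket (N d : ℕ) (hd1 : 1 ≤ d) (hd2 : d ≤ N)
    (A G : Matrix (Fin N) (Fin N) ℂ) (k l : Fin N) :
    ∑ r : Fin d, ∑ s : Fin d,
        (corner N d hd2 A).adjugate s r *
          mixedBr A G (cornerRow N d hd2 r) (cornerCol N d hd2 s) k l
      = (cCoef N d k l : ℂ) * G k l * (corner N d hd2 A).det := by
  set M := corner N d hd2 A with hM
  set R : Fin d → Fin N := cornerRow N d hd2 with hR
  set C : Fin d → Fin N := cornerCol N d hd2 with hC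
  have expand : ∀ r s : Fin d,
      M.adjugate s r * mixedBr A G (R r) (C s) k l
      = M.adjugate s r * ((fsgn (R r) k - 1) * A k (C s) * G (R r) l)
        + M.adjugate s r * ((fsgn (C s) l + 1) * G k (C s) * A (R r) l)
        + M.adjugate s r * ((fsgn (C s) k + 1) * A (R r) k * G (C s) l)
        + M.adjugate s r * ((fsgn (R r) l - 1) * A l (C s) * G k (R r)) := by
    intro r s; simp only [mixedBr]; ring
  simp_rw [expand, Finset.sum_add_distrib]
  have hRval : ∀ r : Fin d, ((R r : Fin N) : ℕ) = N - d + r.val := fun r => rfl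
  have hCval : ∀ s : Fin d, ((C s : Fin N) : ℕ) = s.val := fun s => rfl
  -- Term 1
  have h1 : ∑ r : Fin d, ∑ s : Fin d,
      M.adjugate s r * ((fsgn (R r) k - 1) * A k (C s) * G (R r) l)
      = (if N ≤ (k:ℕ) + d then (-1:ℂ) else 0) * G k l * M.det := by
    by_cases hk : N ≤ (k:ℕ) + d
    · have hk' : N - d ≤ (k:ℕ) := by omega
      set k' : Fin d := ⟨(k:ℕ) - (N - d), by have := k.isLt; omega⟩ with hk'def
      have hRk : R k' = k := by
        apply Fin.ext; rw [hRval]; simp [hk'def]; omega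
      have step : ∀ r s : Fin d,
          M.adjugate s r * ((fsgn (R r) k - 1) * A k (C s) * G (R r) l)
          = M.adjugate s r * (((fsgn (R r) k - 1) * G (R r) l) * M k' s) := by
        intro r s
        have : M k' s = A k (C s) := by show A (R k') (C s) = A k (C s); rw [hRk]
        rw [← this]; ring
      simp_rw [step]
      rw [key2 M (fun r => (fsgn (R r) k - 1) * G (R r) l) k']
      rw [hRk, fsgn_self]
      rw [if_pos hk]; ring
    · have step : ∀ r s : Fin d,
          M.adjugate s r * ((fsgn (R r) k - 1) * A k (C s) * G (R r) l) = 0 := by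
        intro r s
        have : fsgn (R r) k = 1 := fsgn_of_gt (by rw [hRval]; omega)
        rw [this]; ring
      simp_rw [step]
      simp [hk]
  -- Term 2
  have h2 : ∑ r : Fin d, ∑ s : Fin d,
      M.adjugate s r * ((fsgn (C s) l + 1) * G k (C s) * A (R r) l)
      = (if (l:ℕ) < d then (1:ℂ) else 0) * G k l * M.det := by
    by_cases hl : (l:ℕ) < d
    · set l' : Fin d := ⟨(l:ℕ), hl⟩ with hl'def
      have hCl : C l' = l := by apply Fin.ext; rw [hCval]
      have step : ∀ r s : Fin d,
          M.adjugate s r * ((fsgn (C s) l + 1) * G k (C s) * A (R r) l)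
          = M.adjugate s r * (((fsgn (C s) l + 1) * G k (C s)) * M r l') := by
        intro r s
        have : M r l' = A (R r) l := by show A (R r) (C l') = A (R r) l; rw [hCl]
        rw [← this]
      simp_rw [step]
      rw [key1 M (fun s => (fsgn (C s) l + 1) * G k (C s)) l']
      rw [hCl, fsgn_self]
      rw [if_pos hl]; ring
    · have step : ∀ r s : Fin d,
          M.adjugate s r * ((fsgn (C s) l + 1) * G k (C s) * A (R r) l) = 0 := by
        intro r s
        have : fsgn (C s) l = -1 := fsgn_of_lt (by rw [hCval]; have := s.isLt; omega)
        rw [this]; ring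
      simp_rw [step]
      simp [hl]
  -- Term 3
  have h3 : ∑ r : Fin d, ∑ s : Fin d,
      M.adjugate s r * ((fsgn (C s) k + 1) * A (R r) k * G (C s) l)
      = (if (k:ℕ) < d then (1:ℂ) else 0) * G k l * M.det := by
    by_cases hkd : (k:ℕ) < d
    · set k' : Fin d := ⟨(k:ℕ), hkd⟩ with hk'def
      have hCk : C k' = k := by apply Fin.ext; rw [hCval]
      have step : ∀ r s : Fin d,
          M.adjugate s r * ((fsgn (C s) k + 1) * A (R r) k * G (C s) l)
          = M.adjugate s r * (((fsgn (C s) k + 1) * G (C s) l) * M r k') := by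
        intro r s
        have : M r k' = A (R r) k := by show A (R r) (C k') = A (R r) k; rw [hCk]
        rw [← this]; ring_nf
      simp_rw [step]
      rw [key1 M (fun s => (fsgn (C s) k + 1) * G (C s) l) k']
      rw [hCk, fsgn_self]
      rw [if_pos hkd]; ring
    · have step : ∀ r s : Fin d,
          M.adjugate s r * ((fsgn (C s) k + 1) * A (R r) k * G (C s) l) = 0 := by
        intro r s
        have : fsgn (C s) k = -1 := fsgn_of_lt (by rw [hCval]; have := s.isLt; omega)
        rw [this]; ring
      simp_rw [step]
      simp [hkd]
  -- Term 4
  have h4 : ∑ r : Fin d, ∑ s : Fin d,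
      M.adjugate s r * ((fsgn (R r) l - 1) * A l (C s) * G k (R r))
      = (if N ≤ (l:ℕ) + d then (-1:ℂ) else 0) * G k l * M.det := by
    by_cases hl : N ≤ (l:ℕ) + d
    · have hl' : N - d ≤ (l:ℕ) := by omega
      set l' : Fin d := ⟨(l:ℕ) - (N - d), by have := l.isLt; omega⟩ with hl'def
      have hRl : R l' = l := by
        apply Fin.ext; rw [hRval]; simp [hl'def]; omega
      have step : ∀ r s : Fin d,
          M.adjugate s r * ((fsgn (R r) l - 1) * A l (C s) * G k (R r))
          = M.adjugate s r * (((fsgn (R r) l - 1) * G k (R r)) * M l' s) := by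
        intro r s
        have : M l' s = A l (C s) := by show A (R l') (C s) = A l (C s); rw [hRl]
        rw [← this]; ring
      simp_rw [step]
      rw [key2 M (fun r => (fsgn (R r) l - 1) * G k (R r)) l']
      rw [hRl, fsgn_self]
      rw [if_pos hl]; ring
    · have step : ∀ r s : Fin d,
          M.adjugate s r * ((fsgn (R r) l - 1) * A l (C s) * G k (R r)) = 0 := by
        intro r s
        have : fsgn (R r) l = 1 := fsgn_of_gt (by rw [hRval]; omega)
        rw [this]; ring
      simp_rw [step]
      simp [hl]
  rw [h1, h2, h3, h4]
  simp only [cCoef, ge_iff_le]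
  push_cast
  by_cases c1 : N ≤ (k:ℕ) + d <;> by_cases c2 : (l:ℕ) < d <;>
    by_cases c3 : (k:ℕ) < d <;> by_cases c4 : N ≤ (l:ℕ) + d <;>
    simp [c1, c2, c3, c4] <;> ring
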